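/- Let R be a one-dimensional Gorenstein commutative Noetherian local domain and I a nonzero ideal of R which is a trace ideal, i.e. I = τ(I). If I is not isomorphic to R as an R-module (equivalently, I is not free), then I ⊗_R Hom_R(I,R) has a nonzero torsion submodule, i.e. there is a nonzero element of I ⊗_R Hom_R(I,R) annihilated by a nonzero element of R. -/

import Mathlib

open CategoryTheory TensorProduct

universe u

/-- The trace ideal of a module: the ideal generated by all images of maps `M →ₗ[R] R`. -/
def traceIdeal (R : Type u) (M : Type*) [CommRing R] [AddCommGroup M] [Module R M] :
    Ideal R :=
  ⨆ f : M →ₗ[R] R, LinearMap.range f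

/-- A commutative Noetherian local ring is Gorenstein if `Ext^i_R(k,R) = 0` for some
`i > dim R`, where `k` is the residue field. -/
def IsGorensteinLocalRing (R : Type u) [CommRing R] [IsLocalRing R] : Prop :=
  ∃ i : ℕ, ringKrullDim R < i ∧
    Subsingleton (((Ext R (ModuleCat.{u} R) i).obj
      (Opposite.op (ModuleCat.of R (IsLocalRing.ResidueField R)))).obj (ModuleCat.of R R))

section Aux

variable {R : Type u} [CommRing R] (I : Ideal R)

/-- Evaluation map `I ⊗ Hom(I,R) → R`. -/
noncomputable def evalMu : (I ⊗[R] (I →ₗ[R] R)) →ₗ[R] R :=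
  TensorProduct.lift LinearMap.applyₗ

@[simp] lemma evalMu_tmul (a : I) (f : I →ₗ[R] R) : evalMu I (a ⊗ₜ f) = f a := rfl

/-- The map `I ⊗ Hom(I,R) → Hom(I,R)`, `b ⊗ f ↦ b • f`. -/
noncomputable def psiMap : (I ⊗[R] (I →ₗ[R] R)) →ₗ[R] (I →ₗ[R] R) :=
  TensorProduct.lift ((LinearMap.lsmul R (I →ₗ[R] R)).comp I.subtype)

@[simp] lemma psiMap_tmul (b : I) (f : I →ₗ[R] R) : psiMap I (b ⊗ₜ f) = (b : R) • f := rfl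

lemma swap_mul (f : I →ₗ[R] R) (b c : I) : (b : R) * f c = (c : R) * f b := by
  have h1 : f ((b : R) • c) = (b : R) * f c := by rw [map_smul, smul_eq_mul]
  have h2 : f ((c : R) • b) = (c : R) * f b := by rw [map_smul, smul_eq_mul]
  have h3 : (b : R) • c = (c : R) • b := Subtype.ext (by
    simp [Submodule.coe_smul, smul_eq_mul, mul_comm])
  rw [← h1, ← h2, h3]

lemma psiMap_apply_eq (z : I ⊗[R] (I →ₗ[R] R)) (c : I) :
    psiMap I z c = (c : R) * evalMu I z := by
  induction z using TensorProduct.induction_on with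
  | zero => simp
  | tmul b f => simp [swap_mul I f b c]
  | add z w hz hw => simp [map_add, hz, hw, mul_add, LinearMap.add_apply]

lemma smul_eq_tmul_psiMap (a : I) (z : I ⊗[R] (I →ₗ[R] R)) :
    (a : R) • z = a ⊗ₜ psiMap I z := by
  induction z using TensorProduct.induction_on with
  | zero => simp
  | tmul b f =>
      have h3 : (a : R) • b = (b : R) • a := Subtype.ext (by
        simp [Submodule.coe_smul, smul_eq_mul, mul_comm])
      rw [psiMap_tmul, smul_tmul', h3, smul_tmul]
  | add z w hz hw => simp only [smul_add, map_add, tmul_add, hz, hw]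

lemma smul_eq_zero_of_evalMu_eq_zero (a : I) (z : I ⊗[R] (I →ₗ[R] R))
    (hz : evalMu I z = 0) : (a : R) • z = 0 := by
  rw [smul_eq_tmul_psiMap]
  have : psiMap I z = 0 := by
    ext c; rw [psiMap_apply_eq, hz, mul_zero]; rfl
  rw [this, tmul_zero]

end Aux

lemma exists_almost_integral (R : Type u) [CommRing R] [IsDomain R] [IsNoetherianRing R]
    [IsLocalRing R] (hdim : ringKrullDim R = 1) (x : R) (hx0 : x ≠ 0)
    (hxm : x ∈ IsLocalRing.maximalIdeal R) :
    ∃ y : R, y ∉ Ideal.span {x} ∧ ∀ c ∈ IsLocalRing.maximalIdeal R, x ∣ y * c := by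
  classical
  have hprime : ∀ p : Ideal R, p.IsPrime → Ideal.span {x} ≤ p →
      p = IsLocalRing.maximalIdeal R := by
    intro p hp hle
    have hpm : p ≤ IsLocalRing.maximalIdeal R := IsLocalRing.le_maximalIdeal hp.ne_top
    by_contra hne
    have hplt : p < IsLocalRing.maximalIdeal R := lt_of_le_of_ne hpm hne
    have hbot : (⊥ : Ideal R) < p := by
      refine bot_lt_iff_ne_bot.mpr ?_
      intro h
      exact hx0 (by simpa [h, Ideal.span_le] using hle)
    let pb : PrimeSpectrum R := ⟨⊥, Ideal.bot_prime⟩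
    let pp : PrimeSpectrum R := ⟨p, hp⟩
    let pm : PrimeSpectrum R :=
      ⟨IsLocalRing.maximalIdeal R, (IsLocalRing.maximalIdeal.isMaximal R).isPrime⟩
    have h1 : pb < pp := hbot
    have h2 : pp < pm := hplt
    let c : LTSeries (PrimeSpectrum R) :=
      ((RelSeries.singleton _ pb).snoc pp h1).snoc pm (by
        exact h2)
    have hlen := Order.LTSeries.length_le_krullDim c
    rw [show Order.krullDim (PrimeSpectrum R) = ringKrullDim R from rfl, hdim] at hlen
    have hc2 : c.length = 2 := rfl
    rw [hc2] at hlen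
    norm_num at hlen
  have hrad : IsLocalRing.maximalIdeal R ≤ (Ideal.span {x}).radical := by
    rw [Ideal.radical_eq_sInf]
    refine le_sInf ?_
    rintro p ⟨hle, hp⟩
    rw [hprime p hp hle]
  obtain ⟨n, hn⟩ := Ideal.exists_pow_le_of_le_radical_of_fg hrad
    (IsNoetherian.noetherian (IsLocalRing.maximalIdeal R))
  have hP : ∃ n, IsLocalRing.maximalIdeal R ^ n ≤ Ideal.span {x} := ⟨n, hn⟩
  have hn₀ : IsLocalRing.maximalIdeal R ^ (Nat.find hP) ≤ Ideal.span {x} := Nat.find_spec hP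
  set n₀ := Nat.find hP with hn₀def
  have hn₀ne : n₀ ≠ 0 := by
    intro h
    rw [h, pow_zero, Ideal.one_eq_top, top_le_iff, Ideal.eq_top_iff_one,
      Ideal.mem_span_singleton] at hn₀
    exact (IsLocalRing.mem_maximalIdeal x).mp hxm (isUnit_of_dvd_one hn₀)
  have hmin : ¬ IsLocalRing.maximalIdeal R ^ (n₀ - 1) ≤ Ideal.span {x} :=
    Nat.find_min hP (Nat.sub_lt (Nat.pos_of_ne_zero hn₀ne) one_pos)
  obtain ⟨y, hy1, hy2⟩ := SetLike.not_le_iff_exists.mp hmin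
  refine ⟨y, hy2, fun c hc => ?_⟩
  have hyc : y * c ∈ IsLocalRing.maximalIdeal R ^ (n₀ - 1) * IsLocalRing.maximalIdeal R :=
    Ideal.mul_mem_mul hy1 hc
  rw [← pow_succ, Nat.sub_add_cancel (Nat.pos_of_ne_zero hn₀ne)] at hyc
  exact Ideal.mem_span_singleton.mp (hn₀ hyc)

/-- Let `R` be a one-dimensional Gorenstein commutative Noetherian local domain and `I` a
nonzero trace ideal of `R`.  If `I` is not isomorphic to `R` as an `R`-module, then
`I ⊗_R Hom_R(I,R)` has a nonzero torsion element. -/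
theorem trace_ideal_torsion (R : Type u) [CommRing R] [IsDomain R] [IsNoetherianRing R]
    [IsLocalRing R] (hdim : ringKrullDim R = 1) (hGor : IsGorensteinLocalRing R)
    (I : Ideal R) (hI0 : I ≠ ⊥) (htrace : I = traceIdeal R I)
    (hnotfree : ¬ Nonempty (I ≃ₗ[R] R)) :
    ∃ x : I ⊗[R] (I →ₗ[R] R), x ≠ 0 ∧ ∃ r : R, r ≠ 0 ∧ r • x = 0 := by
  classical
  obtain ⟨x, hxI, hx0⟩ := I.ne_bot_iff.mp hI0
  set aI : ↥I := ⟨x, hxI⟩ with haI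
  have hItop : I ≠ ⊤ := fun h => hnotfree ⟨LinearEquiv.ofTop I h⟩
  have hIm : I ≤ IsLocalRing.maximalIdeal R := IsLocalRing.le_maximalIdeal hItop
  have htr : ∀ (f : ↥I →ₗ[R] R) (c : ↥I), f c ∈ I := by
    intro f c
    have hmem : f c ∈ traceIdeal R ↥I :=
      (le_iSup (fun f : ↥I →ₗ[R] R => LinearMap.range f) f) (LinearMap.mem_range_self f c)
    rwa [← htrace] at hmem
  by_cases hker : ∃ z : ↥I ⊗[R] (↥I →ₗ[R] R), z ≠ 0 ∧ evalMu I z = 0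
  · obtain ⟨z, hz0, hzμ⟩ := hker
    exact ⟨z, hz0, x, hx0, smul_eq_zero_of_evalMu_eq_zero I aI z hzμ⟩
  · exfalso
    push_neg at hker
    have hinj : ∀ z : ↥I ⊗[R] (↥I →ₗ[R] R), evalMu I z = 0 → z = 0 := by
      intro z hz
      by_contra h
      exact hker z h hz
    have key : ∀ (f : ↥I →ₗ[R] R) (a : ↥I),
        a ⊗ₜ[R] f = (LinearMap.codRestrict I f (fun c => htr f c) a) ⊗ₜ[R] I.subtype := by
      intro f a
      have h0 : evalMu I (a ⊗ₜ[R] f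
          - (LinearMap.codRestrict I f (fun c => htr f c) a) ⊗ₜ[R] I.subtype) = 0 := by
        simp
      have h1 := hinj _ h0
      rwa [sub_eq_zero] at h1
    set N : Submodule R (↥I →ₗ[R] R) := Submodule.span R {I.subtype} with hN
    have hTzero : ∀ w : ↥I ⊗[R] ((↥I →ₗ[R] R) ⧸ N), w = 0 := by
      intro w
      obtain ⟨z, rfl⟩ := LinearMap.lTensor_surjective ↥I (N.mkQ_surjective) w
      induction z using TensorProduct.induction_on with
      | zero => simp
      | tmul a f =>
          rw [key f a, LinearMap.lTensor_tmul]
          have hq : N.mkQ I.subtype = 0 :=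
            (Submodule.Quotient.mk_eq_zero N).mpr (Submodule.mem_span_singleton_self _)
          rw [hq, tmul_zero]
      | add z w hz hw => rw [map_add, hz, hw, add_zero]
    haveI hsub : Subsingleton (↥I ⊗[R] ((↥I →ₗ[R] R) ⧸ N)) :=
      subsingleton_of_forall_eq 0 hTzero
    haveI : Module.Finite R ↥I := Module.Finite.iff_fg.mpr (IsNoetherian.noetherian I)
    have hev_inj : Function.Injective (LinearMap.applyₗ (R := R) aI :
        (↥I →ₗ[R] R) →ₗ[R] R) := by
      intro f g hfg
      have hfg' : f aI = g aI := hfg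
      ext c
      have h1 := swap_mul I f aI c
      have h2 := swap_mul I g aI c
      have h3 : (aI : R) * f c = (aI : R) * g c := by rw [h1, h2, hfg']
      exact mul_left_cancel₀ hx0 h3
    haveI : Module.Finite R (↥I →ₗ[R] R) :=
      Module.Finite.of_injective (LinearMap.applyₗ aI) hev_inj
    haveI : Module.Finite R ((↥I →ₗ[R] R) ⧸ N) :=
      Module.Finite.of_surjective (N.mkQ) N.mkQ_surjective
    set k := IsLocalRing.ResidueField R with hk
    haveI : Nontrivial ↥I := Submodule.nontrivial_iff_ne_bot.mpr hI0
    haveI : Nontrivial (k ⊗[R] ↥I) := by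
      rw [← not_subsingleton_iff_nontrivial]
      intro h
      exact (not_subsingleton_iff_nontrivial.mpr ‹Nontrivial ↥I›)
        ((IsLocalRing.subsingleton_tensorProduct (R := R)).mp h)
    let b := Module.Basis.ofVectorSpace k (k ⊗[R] ↥I)
    obtain ⟨i⟩ := b.index_nonempty
    let p' : (k ⊗[R] ↥I) →ₗ[k] k := b.coord i
    have hp'surj : Function.Surjective p' := by
      intro s
      refine ⟨s • b i, ?_⟩
      simp [p']
    let p : (k ⊗[R] ↥I) →ₗ[R] k := p'.restrictScalars R
    have hpsurj : Function.Surjective p := hp'surj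
    -- (k ⊗ I) ⊗ C is subsingleton, via associativity with k ⊗ (I ⊗ C)
    haveI hsub2 : Subsingleton (k ⊗[R] (↥I ⊗[R] ((↥I →ₗ[R] R) ⧸ N))) :=
      inferInstance
    haveI hsub3 : Subsingleton ((k ⊗[R] ↥I) ⊗[R] ((↥I →ₗ[R] R) ⧸ N)) :=
      (TensorProduct.assoc R k ↥I ((↥I →ₗ[R] R) ⧸ N)).toEquiv.subsingleton
    haveI hsub4 : Subsingleton (k ⊗[R] ((↥I →ₗ[R] R) ⧸ N)) :=
      (LinearMap.rTensor_surjective ((↥I →ₗ[R] R) ⧸ N) hpsurj).subsingleton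
    haveI hCsub : Subsingleton ((↥I →ₗ[R] R) ⧸ N) :=
      (IsLocalRing.subsingleton_tensorProduct (R := R)).mp hsub4
    have hspan : ∀ f : ↥I →ₗ[R] R, f ∈ N := fun f =>
      (Submodule.Quotient.mk_eq_zero N).mp (Subsingleton.elim _ _)
    -- construct the functional from the almost-integral element y
    obtain ⟨y, hy, hyd⟩ := exists_almost_integral R hdim x hx0 (hIm hxI)
    choose q hq using fun (c : ↥I) => hyd c (hIm c.2)
    have hqadd : ∀ c c' : ↥I, q (c + c') = q c + q c' := by
      intro c c'
      apply mul_left_cancel₀ hx0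
      rw [mul_add, ← hq, ← hq, ← hq]
      push_cast
      ring
    have hqsmul : ∀ (r : R) (c : ↥I), q (r • c) = r * q c := by
      intro r c
      apply mul_left_cancel₀ hx0
      rw [← hq, Submodule.coe_smul, smul_eq_mul,
        show x * (r * q c) = r * (x * q c) by ring, ← hq]
      ring
    let g : ↥I →ₗ[R] R :=
      { toFun := q
        map_add' := hqadd
        map_smul' := hqsmul }
    obtain ⟨r, hr⟩ := Submodule.mem_span_singleton.mp (hspan g)
    have hgx : q aI = r * x := by
      have := congrArg (fun f : ↥I →ₗ[R] R => f aI) hr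
      simpa [g] using this.symm
    have hyx : y * x = x * (r * x) := by
      have := hq aI
      rwa [hgx] at this
    have hyrx : y = x * r := by
      have h' : y * x = (x * r) * x := by rw [hyx]; ring
      exact mul_right_cancel₀ hx0 h'
    exact hy (Ideal.mem_span_singleton.mpr ⟨r, hyrx⟩)
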